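/- arXiv:1511.01976 — 4 statements merged into one kernel-verified Lean document; each statement's English description precedes it below -/
import Mathlib

section
/- First Welfare Theorem for exchange economies with monotone preferences: if (X, P) is a competitive (Walrasian) equilibrium of an exchange economy with strictly increasing utility functions, then the allocation X is Pareto optimal. -/
open Finset

/-- Dot product of two price/quantity vectors. -/
def dot {M : ℕ} (P x : Fin M → ℝ) : ℝ := ∑ m, P m * x m

/-- A utility on nonnegative bundles is strictly increasing if enlarging the
bundle (componentwise `≤` with at least one strict coordinate) strictly
increases utility. -/
def StrictlyIncreasingUtility (M : ℕ) (u : (Fin M → ℝ) → ℝ) : Prop :=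
  ∀ x y : Fin M → ℝ, (∀ m, 0 ≤ x m) → (∀ m, 0 ≤ y m) →
    x ≤ y → x ≠ y → u x < u y

/-- First Welfare Theorem: if `(X, P)` is a Walrasian
equilibrium of an exchange economy with strictly increasing utilities, then
the allocation `X` is Pareto optimal. -/
theorem first_welfare_theorem
    (N M : ℕ) (u : Fin N → (Fin M → ℝ) → ℝ)
    (Q : Fin N → Fin M → ℝ) (hQ : ∀ n m, 0 ≤ Q n m)
    (hmono : ∀ n, StrictlyIncreasingUtility M (u n))
    (X : Fin N → Fin M → ℝ) (P : Fin M → ℝ) (hP : ∀ m, 0 ≤ P m)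
    (hXpos : ∀ n m, 0 ≤ X n m)
    -- each `X n` maximizes `u n` over the budget set
    (hbudget : ∀ n, dot P (X n) ≤ dot P (Q n))
    (hmax : ∀ n, ∀ x : Fin M → ℝ, (∀ m, 0 ≤ x m) →
        dot P x ≤ dot P (Q n) → u n x ≤ u n (X n))
    -- markets clear
    (hclear : ∀ m, ∑ n, X n m = ∑ n, Q n m) :
    ¬ ∃ X' : Fin N → Fin M → ℝ,
        (∀ n m, 0 ≤ X' n m) ∧ (∀ m, ∑ n, X' n m ≤ ∑ n, Q n m) ∧
        (∀ n, u n (X n) ≤ u n (X' n)) ∧ (∃ n, u n (X n) < u n (X' n)) := by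
  rintro ⟨X', hX'pos, hfeas, hge, n₀, hlt⟩
  -- the strictly better bundle must be unaffordable
  have hstrict : dot P (Q n₀) < dot P (X' n₀) := by
    by_contra h
    push_neg at h
    exact absurd (hmax n₀ (X' n₀) (hX'pos n₀) h) (not_le.mpr hlt)
  -- total price is positive
  have hS0 : 0 < ∑ m, P m := by
    rcases (Finset.sum_nonneg fun m _ => hP m).lt_or_eq with h | h
    · exact h
    · exfalso
      have hPz : ∀ m, P m = 0 := fun m =>
        (Finset.sum_eq_zero_iff_of_nonneg (fun m _ => hP m)).mp h.symm m (mem_univ m)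
      have h1 : dot P (X' n₀) = 0 := by simp [dot, hPz]
      have h2 : dot P (Q n₀) = 0 := by simp [dot, hPz]
      linarith
  have hM : Nonempty (Fin M) := by
    by_contra h
    rw [not_nonempty_iff] at h
    simp [Finset.univ_eq_empty] at hS0
  -- every weakly preferred bundle costs at least the endowment
  have hcost : ∀ n, dot P (Q n) ≤ dot P (X' n) := by
    intro n
    by_contra h
    push_neg at h
    set ε := (dot P (Q n) - dot P (X' n)) / (∑ m, P m) with hε
    have hε0 : 0 < ε := div_pos (by linarith) hS0
    have hεS : ε * ∑ m, P m = dot P (Q n) - dot P (X' n) :=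
      div_mul_cancel₀ _ hS0.ne'
    have hxb : dot P (fun m => X' n m + ε) ≤ dot P (Q n) := by
      have hsum : ∑ m, P m * (X' n m + ε) = (∑ m, P m * X' n m) + ε * ∑ m, P m := by
        rw [Finset.mul_sum, ← Finset.sum_add_distrib]
        congr 1; ext m; ring
      simp only [dot] at hεS ⊢
      rw [hsum]
      linarith
    have hub := hmax n (fun m => X' n m + ε)
      (fun m => by simpa using add_nonneg (hX'pos n m) hε0.le) hxb
    have hmo := hmono n (X' n) (fun m => X' n m + ε) (hX'pos n)
      (fun m => by simpa using add_nonneg (hX'pos n m) hε0.le)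
      (fun m => by simp [le_of_lt hε0])
      (by
        intro hxy
        have := congrFun hxy (Classical.arbitrary (Fin M))
        simp at this
        linarith)
    have := hge n
    linarith
  -- sum the budget inequalities
  have key : ∀ Y : Fin N → Fin M → ℝ, ∑ n, dot P (Y n) = ∑ m, P m * ∑ n, Y n m := by
    intro Y
    simp only [dot]
    rw [Finset.sum_comm]
    simp [Finset.mul_sum]
  have hsumle : ∑ n, dot P (X' n) ≤ ∑ n, dot P (Q n) := by
    rw [key, key]
    exact Finset.sum_le_sum fun m _ => mul_le_mul_of_nonneg_left (hfeas m) (hP m)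
  have hsumlt : ∑ n, dot P (Q n) < ∑ n, dot P (X' n) :=
    Finset.sum_lt_sum (fun n _ => hcost n) ⟨n₀, mem_univ n₀, hstrict⟩
  linarith
end

section
/- If the aggregate excess demand function z : ℝ_{>0}^M → ℝ^M is homogeneous of degree zero, satisfies Walras' law (P·z(P) = 0 for all P), and satisfies the gross substitutes condition (if p'_k > p_k for one good k and p'_m = p_m for all m ≠ k, then z_m(P') > z_m(P) for all m ≠ k), then there is at most one equilibrium price vector up to positive scaling; i.e., if z(P) = 0 and z(P') = 0 then P' = λP for some λ > 0. -/
open Finset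

/-- Positivity of a price vector. -/
def PosPrice {M : ℕ} (P : Fin M → ℝ) : Prop := ∀ m, 0 < P m

/-- if the aggregate excess demand is homogeneous of degree zero,
satisfies Walras' law and the gross substitutes condition, then the
equilibrium price vector is unique up to positive scaling. -/
theorem equilibrium_unique_up_to_scaling
    (M : ℕ) (z : (Fin M → ℝ) → Fin M → ℝ)
    (hhom : ∀ P : Fin M → ℝ, PosPrice P → ∀ lam : ℝ, 0 < lam →
        z (lam • P) = z P)
    (hwalras : ∀ P : Fin M → ℝ, PosPrice P → ∑ m, P m * z P m = 0)
    (hgs : ∀ P P' : Fin M → ℝ, PosPrice P → PosPrice P' →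
        ∀ k : Fin M, P k < P' k → (∀ m, m ≠ k → P' m = P m) →
        ∀ m, m ≠ k → z P m < z P' m)
    (P P' : Fin M → ℝ) (hP : PosPrice P) (hP' : PosPrice P')
    (heq : z P = 0) (heq' : z P' = 0) :
    ∃ lam : ℝ, 0 < lam ∧ P' = lam • P := by
  rcases Nat.eq_zero_or_pos M with hM | hM
  · subst hM
    exact ⟨1, one_pos, funext fun m => m.elim0⟩
  obtain ⟨k, -, hk⟩ := Finset.exists_max_image Finset.univ (fun m => P' m / P m)
      ⟨⟨0, hM⟩, Finset.mem_univ _⟩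
  set lam := P' k / P k with hlam
  have hlampos : 0 < lam := div_pos (hP' k) (hP k)
  set Q : Fin M → ℝ := lam • P with hQ
  have hQdef : ∀ m, Q m = lam * P m := fun m => rfl
  have hQpos : PosPrice Q := fun m => mul_pos hlampos (hP m)
  have hle : ∀ m, P' m ≤ Q m := by
    intro m
    have h1 : P' m / P m ≤ lam := hk m (Finset.mem_univ m)
    have h2 : P' m = (P' m / P m) * P m := (div_mul_cancel₀ _ (hP m).ne').symm
    rw [hQdef, h2]
    exact mul_le_mul_of_nonneg_right h1 (le_of_lt (hP m))
  have hQk : Q k = P' k := by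
    rw [hQdef, hlam]
    exact div_mul_cancel₀ _ (hP k).ne'
  have hzQ : z Q = 0 := by
    rw [hQ, hhom P hP lam hlampos]; exact heq
  by_cases hS0 : ∀ m, Q m = P' m
  · exact ⟨lam, hlampos, funext fun m => (hS0 m).symm⟩
  exfalso
  push_neg at hS0
  obtain ⟨j0, hj0⟩ := hS0
  set S : Finset (Fin M) := Finset.univ.filter (fun m => P' m < Q m) with hSdef
  have hj0S : j0 ∈ S := by
    refine Finset.mem_filter.2 ⟨Finset.mem_univ _, ?_⟩
    exact lt_of_le_of_ne (hle j0) (fun h => hj0 h.symm)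
  have hkS : k ∉ S := by
    simp only [hSdef, Finset.mem_filter, Finset.mem_univ, true_and]
    rw [hQk]; exact lt_irrefl _
  -- interpolating price vectors
  set R : Finset (Fin M) → (Fin M → ℝ) := fun T m => if m ∈ T then Q m else P' m with hRdef
  have hRpos : ∀ T, PosPrice (R T) := by
    intro T m
    by_cases hm : m ∈ T <;> simp [hRdef, hm, hQpos m, hP' m]
  have hR0 : R ∅ = P' := by funext m; simp [hRdef]
  -- key induction
  have key : ∀ T : Finset (Fin M), T ⊆ S → T.Nonempty → z P' k < z (R T) k := by
    intro T
    induction T using Finset.induction_on with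
    | empty => intro _ h; exact absurd rfl h.ne_empty
    | @insert j T hjT ih =>
      intro hsub _
      have hjS : j ∈ S := hsub (Finset.mem_insert_self j T)
      have hTS : T ⊆ S := fun x hx => hsub (Finset.mem_insert_of_mem hx)
      have hjk : j ≠ k := fun h => hkS (h ▸ hjS)
      have hjlt : P' j < Q j := (Finset.mem_filter.1 hjS).2
      have hstep : z (R T) k < z (R (insert j T)) k := by
        refine hgs (R T) (R (insert j T)) (hRpos T) (hRpos (insert j T)) j ?_ ?_ k (Ne.symm hjk)
        · simp [hRdef, hjT, hjlt]
        · intro m hm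
          simp only [hRdef, Finset.mem_insert]
          by_cases hmT : m ∈ T <;> simp [hmT, hm]
      rcases T.eq_empty_or_nonempty with hT | hT
      · subst hT
        rw [hR0] at hstep
        exact hstep
      · exact lt_trans (ih hTS hT) hstep
  have hRS : R S = Q := by
    funext m
    by_cases hm : m ∈ S
    · simp [hRdef, hm]
    · have : ¬ P' m < Q m := by
        simpa [hSdef] using hm
      have : Q m = P' m := le_antisymm (not_lt.1 this) (hle m)
      simp [hRdef, hm, this]
  have := key S (le_refl S) ⟨j0, hj0S⟩
  rw [hRS, hzQ, heq'] at this
  exact lt_irrefl _ this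
end

section
/- If the aggregate excess demand z satisfies gross substitutes, homogeneity of degree zero, and Walras' law, and P* is an equilibrium price (z(P*)=0), then for any price vector P not proportional to P*, we have P*·z(P) > 0. -/
open Finset

namespace EqValAux

variable {M : ℕ} {z : (Fin M → ℝ) → Fin M → ℝ}

lemma chain_le
    (hgs : ∀ P P' : Fin M → ℝ, PosPrice P → PosPrice P' →
        ∀ k : Fin M, P k < P' k → (∀ m, m ≠ k → P' m = P m) →
        ∀ m, m ≠ k → z P m < z P' m)
    (D : Finset (Fin M)) :
    ∀ Q Q' : Fin M → ℝ, PosPrice Q → PosPrice Q' →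
      (∀ i, i ∉ D → Q i = Q' i) → (∀ i, Q i ≤ Q' i) →
      ∀ j, Q j = Q' j → z Q j ≤ z Q' j := by
  induction D using Finset.induction_on with
  | empty =>
      intro Q Q' _ _ hout _ j _
      have hQQ : Q = Q' := funext fun i => hout i (Finset.notMem_empty i)
      subst hQQ; exact le_rfl
  | @insert i D hiD ih =>
      intro Q Q' hQ hQ' hout hle j hj
      by_cases hi : Q i = Q' i
      · refine ih Q Q' hQ hQ' (fun i' hi' => ?_) hle j hj
        by_cases h : i' = i
        · subst h; exact hi
        · exact hout i' (by simp [Finset.mem_insert, h, hi'])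
      · set Q'' := Function.update Q i (Q' i) with hQ''def
        have hQ'' : PosPrice Q'' := by
          intro m
          by_cases h : m = i
          · subst h; simpa [Q''] using hQ' m
          · simpa [Q'', Function.update_of_ne h] using hQ m
        have hlt : Q i < Q' i := lt_of_le_of_ne (hle i) hi
        have hji : j ≠ i := fun h => hi (h ▸ hj)
        have h1 : z Q j < z Q'' j := by
          refine hgs Q Q'' hQ hQ'' i ?_ ?_ j hji
          · simpa [Q''] using hlt
          · intro m hm; simp [Q'', Function.update_of_ne hm]
        have h2 : z Q'' j ≤ z Q' j := by
          refine ih Q'' Q' hQ'' hQ' (fun i' hi' => ?_) (fun m => ?_) j ?_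
          · by_cases h : i' = i
            · subst h; simp [Q'']
            · have : i' ∉ insert i D := by simp [Finset.mem_insert, h, hi']
              simpa [Q'', Function.update_of_ne h] using hout i' this
          · by_cases h : m = i
            · subst h; simp [Q'']
            · simpa [Q'', Function.update_of_ne h] using hle m
          · simpa [Q'', Function.update_of_ne hji] using hj
        linarith

lemma chain_lt
    (hgs : ∀ P P' : Fin M → ℝ, PosPrice P → PosPrice P' →
        ∀ k : Fin M, P k < P' k → (∀ m, m ≠ k → P' m = P m) →
        ∀ m, m ≠ k → z P m < z P' m)
    (Q Q' : Fin M → ℝ) (hQ : PosPrice Q) (hQ' : PosPrice Q')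
    (hle : ∀ i, Q i ≤ Q' i) (i₀ : Fin M) (hi₀ : Q i₀ < Q' i₀)
    (j : Fin M) (hj : Q j = Q' j) : z Q j < z Q' j := by
  set Q'' := Function.update Q i₀ (Q' i₀) with hQ''def
  have hQ'' : PosPrice Q'' := by
    intro m
    by_cases h : m = i₀
    · subst h; simpa [Q''] using hQ' m
    · simpa [Q'', Function.update_of_ne h] using hQ m
  have hji : j ≠ i₀ := fun h => absurd hj (by subst h; exact ne_of_lt hi₀)
  have h1 : z Q j < z Q'' j := by
    refine hgs Q Q'' hQ hQ'' i₀ ?_ ?_ j hji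
    · simpa [Q''] using hi₀
    · intro m hm; simp [Q'', Function.update_of_ne hm]
  have h2 : z Q'' j ≤ z Q' j := by
    refine chain_le hgs Finset.univ Q'' Q' hQ'' hQ'
      (fun i' hi' => absurd (Finset.mem_univ i') hi') (fun m => ?_) j ?_
    · by_cases h : m = i₀
      · subst h; simp [Q'']
      · simpa [Q'', Function.update_of_ne h] using hle m
    · simpa [Q'', Function.update_of_ne hji] using hj
  linarith


lemma cum_pos
    (hhom : ∀ P : Fin M → ℝ, PosPrice P → ∀ lam : ℝ, 0 < lam →
        z (lam • P) = z P)
    (hwalras : ∀ P : Fin M → ℝ, PosPrice P → ∑ m, P m * z P m = 0)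
    (hgs : ∀ P P' : Fin M → ℝ, PosPrice P → PosPrice P' →
        ∀ k : Fin M, P k < P' k → (∀ m, m ≠ k → P' m = P m) →
        ∀ m, m ≠ k → z P m < z P' m)
    (Pstar : Fin M → ℝ) (hPstar : PosPrice Pstar) (heq : z Pstar = 0)
    (P : Fin M → ℝ) (hP : PosPrice P)
    (ℓ : Fin M) (hℓ : P ℓ = Pstar ℓ)
    (t : ℝ) (ht0 : 0 < t) (ht1 : t < 1)
    (hLne : ∃ m, P m ≤ t * Pstar m) :
    0 < ∑ m ∈ univ.filter (fun m => P m ≤ t * Pstar m), P m * z P m := by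
  classical
  set r : Fin M → ℝ := fun m => max (P m) (t * Pstar m) with hrdef
  have hr : PosPrice r := fun m => lt_max_of_lt_left (hP m)
  have htP : PosPrice (t • Pstar) := fun m => by
    have := hPstar m; simp only [Pi.smul_apply, smul_eq_mul]; positivity
  have hz0 : ∀ m, z (t • Pstar) m = 0 := by
    intro m
    rw [hhom Pstar hPstar t ht0, heq]; rfl
  have hler : ∀ m, (t • Pstar) m ≤ r m := fun m => le_max_right _ _
  have hℓr : (t • Pstar) ℓ < r ℓ := by
    have h1 : t * Pstar ℓ < Pstar ℓ := by nlinarith [hPstar ℓ]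
    have h2 : P ℓ ≤ r ℓ := le_max_left _ _
    simp only [Pi.smul_apply, smul_eq_mul]
    calc t * Pstar ℓ < Pstar ℓ := h1
    _ = P ℓ := hℓ.symm
    _ ≤ r ℓ := h2
  -- z r m > 0 for m in L
  have hzr : ∀ m, P m ≤ t * Pstar m → 0 < z r m := by
    intro m hm
    have hrm : (t • Pstar) m = r m := by
      simp only [Pi.smul_apply, smul_eq_mul, hrdef]
      exact (max_eq_right hm).symm
    have := chain_lt hgs (t • Pstar) r htP hr hler ℓ hℓr m hrm
    rw [hz0 m] at this; exact this
  -- Walras at r, split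
  have hwr : ∑ m ∈ univ.filter (fun m => P m ≤ t * Pstar m), r m * z r m
      + ∑ m ∈ univ.filter (fun m => ¬ P m ≤ t * Pstar m), r m * z r m = 0 := by
    rw [Finset.sum_filter_add_sum_filter_not]
    exact hwalras r hr
  have hLne' : (univ.filter (fun m => P m ≤ t * Pstar m)).Nonempty := by
    obtain ⟨m, hm⟩ := hLne
    exact ⟨m, by simp [hm]⟩
  have hSL : 0 < ∑ m ∈ univ.filter (fun m => P m ≤ t * Pstar m), r m * z r m := by
    refine Finset.sum_pos (fun m hm => ?_) hLne'
    have hm' : P m ≤ t * Pstar m := by simpa using hm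
    exact mul_pos (hr m) (hzr m hm')
  have hSH : ∑ m ∈ univ.filter (fun m => ¬ P m ≤ t * Pstar m), r m * z r m < 0 := by
    linarith
  -- on H, r = P and z P ≤ z r
  have hHr : ∀ m, ¬ P m ≤ t * Pstar m → r m = P m := by
    intro m hm
    exact max_eq_left (le_of_lt (lt_of_not_ge hm))
  have hPr : ∀ j, P j = r j → z P j ≤ z r j := by
    intro j hj
    exact chain_le hgs Finset.univ P r hP hr
      (fun i hi => absurd (Finset.mem_univ i) hi) (fun m => le_max_left _ _) j hj
  have hSH2 : ∑ m ∈ univ.filter (fun m => ¬ P m ≤ t * Pstar m), P m * z P m < 0 := by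
    have hstep : ∑ m ∈ univ.filter (fun m => ¬ P m ≤ t * Pstar m), P m * z P m
        ≤ ∑ m ∈ univ.filter (fun m => ¬ P m ≤ t * Pstar m), r m * z r m := by
      refine Finset.sum_le_sum (fun m hm => ?_)
      have hm' : ¬ P m ≤ t * Pstar m := by simpa using hm
      have h1 : r m = P m := hHr m hm'
      rw [h1]
      exact mul_le_mul_of_nonneg_left (hPr m h1.symm) (le_of_lt (hP m))
    linarith
  have hwP : ∑ m ∈ univ.filter (fun m => P m ≤ t * Pstar m), P m * z P m
      + ∑ m ∈ univ.filter (fun m => ¬ P m ≤ t * Pstar m), P m * z P m = 0 := by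
    rw [Finset.sum_filter_add_sum_filter_not]
    exact hwalras P hP
  linarith


lemma abel_nonneg {M : ℕ} (c : Fin M → ℝ) :
    ∀ (n : ℕ) (r : Fin M → ℝ), (∀ m, 0 < r m) → (∀ m, r m ≤ 1) →
    ((Finset.image r univ).filter (fun v => v < 1)).card ≤ n →
    (∀ t : ℝ, t < 1 → 0 ≤ ∑ m ∈ univ.filter (fun m => r m ≤ t), c m) →
    0 ≤ ∑ m, c m * (1 / r m - 1) := by
  intro n
  induction n with
  | zero =>
      intro r hr0 hr1 hcard _
      have hall : ∀ m, r m = 1 := by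
        intro m
        by_contra h
        have hlt : r m < 1 := lt_of_le_of_ne (hr1 m) h
        have : r m ∈ (Finset.image r univ).filter (fun v => v < 1) :=
          Finset.mem_filter.mpr ⟨Finset.mem_image_of_mem r (Finset.mem_univ m), hlt⟩
        have := Finset.card_pos.mpr ⟨_, this⟩
        omega
      refine le_of_eq (Finset.sum_eq_zero fun m _ => ?_).symm
      rw [hall m]; ring
  | succ n ih =>
      intro r hr0 hr1 hcard hcum
      by_cases hall : ∀ m, r m = 1
      · refine le_of_eq (Finset.sum_eq_zero fun m _ => ?_).symm
        rw [hall m]; ring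
      push_neg at hall
      obtain ⟨m₀, hm₀⟩ := hall
      set V := (Finset.image r univ).filter (fun v => v < 1) with hVdef
      have hVne : V.Nonempty := by
        refine ⟨r m₀, ?_⟩
        simp only [hVdef, Finset.mem_filter, Finset.mem_image]
        exact ⟨⟨m₀, Finset.mem_univ m₀, rfl⟩, lt_of_le_of_ne (hr1 m₀) hm₀⟩
      set μ := V.min' hVne with hμdef
      have hμmem : μ ∈ V := Finset.min'_mem _ _
      have hμlt1 : μ < 1 := (Finset.mem_filter.mp hμmem).2
      have hμpos : 0 < μ := by
        obtain ⟨m, _, hm⟩ := Finset.mem_image.mp (Finset.mem_filter.mp hμmem).1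
        rw [← hm]; exact hr0 m
      have hμle : ∀ m, μ ≤ r m := by
        intro m
        rcases lt_or_eq_of_le (hr1 m) with h | h
        · exact Finset.min'_le _ _ (by
            simp only [hVdef, Finset.mem_filter, Finset.mem_image]
            exact ⟨⟨m, Finset.mem_univ m, rfl⟩, h⟩)
        · rw [h]; exact le_of_lt hμlt1
      set U := insert (1:ℝ) (V.filter (fun v => μ < v)) with hUdef
      have hUne : U.Nonempty := ⟨1, Finset.mem_insert_self _ _⟩
      set μ' := U.min' hUne with hμ'def
      have hμμ' : μ < μ' := by
        rw [hμ'def, Finset.lt_min'_iff]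
        intro x hx
        rcases Finset.mem_insert.mp hx with h | h
        · rw [h]; exact hμlt1
        · exact (Finset.mem_filter.mp h).2
      have hμ'pos : 0 < μ' := lt_trans hμpos hμμ'
      have hμ'le1 : μ' ≤ 1 := Finset.min'_le _ _ (Finset.mem_insert_self _ _)
      have hgap : ∀ m, r m ≠ μ → μ' ≤ r m := by
        intro m hm
        rcases lt_or_eq_of_le (hr1 m) with h | h
        · refine Finset.min'_le _ _ ?_
          refine Finset.mem_insert_of_mem (Finset.mem_filter.mpr ⟨?_, ?_⟩)
          · simp only [hVdef, Finset.mem_filter, Finset.mem_image]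
            exact ⟨⟨m, Finset.mem_univ m, rfl⟩, h⟩
          · exact lt_of_le_of_ne (hμle m) (Ne.symm hm)
        · rw [h]; exact hμ'le1
      set r' : Fin M → ℝ := fun m => if r m = μ then μ' else r m with hr'def
      have hr0' : ∀ m, 0 < r' m := by
        intro m; by_cases h : r m = μ <;> simp [hr'def, h, hμ'pos, hr0 m]
      have hr1' : ∀ m, r' m ≤ 1 := by
        intro m; by_cases h : r m = μ <;> simp [hr'def, h, hμ'le1, hr1 m]
      have hgap' : ∀ m, μ' ≤ r' m := by
        intro m
        by_cases h : r m = μ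
        · simp [hr'def, h]
        · simp only [hr'def, if_neg h]; exact hgap m h
      have hcard' : ((Finset.image r' univ).filter (fun v => v < 1)).card ≤ n := by
        have hsub : (Finset.image r' univ).filter (fun v => v < 1) ⊆ V.erase μ := by
          intro v hv
          obtain ⟨hv1, hv2⟩ := Finset.mem_filter.mp hv
          obtain ⟨m, _, hm⟩ := Finset.mem_image.mp hv1
          by_cases h : r m = μ
          · have hvμ' : v = μ' := by rw [← hm]; simp [hr'def, h]
            have hμ'ne1 : μ' ≠ 1 := by rw [← hvμ']; exact ne_of_lt hv2
            have hμ'V : μ' ∈ V.filter (fun v => μ < v) := by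
              rcases Finset.mem_insert.mp (Finset.min'_mem U hUne) with hh | hh
              · exact absurd hh hμ'ne1
              · exact hh
            rw [hvμ']
            exact Finset.mem_erase.mpr ⟨ne_of_gt hμμ', (Finset.mem_filter.mp hμ'V).1⟩
          · have hvr : v = r m := by rw [← hm]; simp [hr'def, h]
            refine Finset.mem_erase.mpr ⟨by rw [hvr]; exact h, ?_⟩
            simp only [hVdef, Finset.mem_filter, Finset.mem_image]
            exact ⟨⟨m, Finset.mem_univ m, hvr.symm⟩, hv2⟩
        have := Finset.card_le_card hsub
        have h2 := Finset.card_erase_of_mem hμmem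
        omega
      have hcum' : ∀ t : ℝ, t < 1 → 0 ≤ ∑ m ∈ univ.filter (fun m => r' m ≤ t), c m := by
        intro t ht
        by_cases hμ't : μ' ≤ t
        · have hset : univ.filter (fun m => r' m ≤ t) = univ.filter (fun m => r m ≤ t) := by
            ext m
            simp only [Finset.mem_filter, Finset.mem_univ, true_and]
            by_cases h : r m = μ
            · simp [hr'def, h, hμ't, le_trans (le_of_lt hμμ') hμ't]
            · simp [hr'def, h]
          rw [hset]; exact hcum t ht
        · have hset : univ.filter (fun m => r' m ≤ t) = ∅ := by
            refine Finset.filter_eq_empty_iff.mpr (fun m _ => ?_)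
            push_neg
            exact lt_of_lt_of_le (lt_of_not_ge hμ't) (hgap' m)
          rw [hset]; simp
      have hih := ih r' hr0' hr1' hcard' hcum'
      -- key pointwise identity
      have hkey : ∀ m, c m * (1 / r m - 1) =
          c m * (1 / r' m - 1) + (if r m = μ then c m * (1 / μ - 1 / μ') else 0) := by
        intro m
        by_cases h : r m = μ
        · have hr'm : r' m = μ' := by simp [hr'def, h]
          rw [hr'm, h, if_pos rfl]; ring
        · have hr'm : r' m = r m := by simp [hr'def, h]
          rw [hr'm, if_neg h]; ring
      have hsum : ∑ m, c m * (1 / r m - 1) =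
          (∑ m, c m * (1 / r' m - 1)) +
          (∑ m ∈ univ.filter (fun m => r m = μ), c m) * (1 / μ - 1 / μ') := by
        rw [Finset.sum_congr rfl (fun m _ => hkey m), Finset.sum_add_distrib]
        congr 1
        calc ∑ x, (if r x = μ then c x * (1 / μ - 1 / μ') else 0)
            = ∑ x, (if r x = μ then c x else 0) * (1 / μ - 1 / μ') := by
              refine Finset.sum_congr rfl fun x _ => ?_
              by_cases h : r x = μ <;> simp [h]
          _ = (∑ x, if r x = μ then c x else 0) * (1 / μ - 1 / μ') := by
              rw [Finset.sum_mul]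
          _ = (∑ m ∈ univ.filter (fun m => r m = μ), c m) * (1 / μ - 1 / μ') := by
              rw [Finset.sum_filter]
      have hA : 0 ≤ ∑ m ∈ univ.filter (fun m => r m = μ), c m := by
        have hset : univ.filter (fun m => r m = μ) = univ.filter (fun m => r m ≤ μ) := by
          ext m
          simp only [Finset.mem_filter, Finset.mem_univ, true_and]
          constructor
          · intro h; rw [h]
          · intro h; exact le_antisymm h (hμle m)
        rw [hset]; exact hcum μ hμlt1
      have hK : 0 < 1 / μ - 1 / μ' := by
        have h1 : 1 / μ' < 1 / μ := by
          apply one_div_lt_one_div_of_lt hμpos hμμ'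
        linarith
      rw [hsum]
      have := mul_nonneg hA (le_of_lt hK)
      linarith


lemma main_norm
    (hhom : ∀ P : Fin M → ℝ, PosPrice P → ∀ lam : ℝ, 0 < lam →
        z (lam • P) = z P)
    (hwalras : ∀ P : Fin M → ℝ, PosPrice P → ∑ m, P m * z P m = 0)
    (hgs : ∀ P P' : Fin M → ℝ, PosPrice P → PosPrice P' →
        ∀ k : Fin M, P k < P' k → (∀ m, m ≠ k → P' m = P m) →
        ∀ m, m ≠ k → z P m < z P' m)
    (Pstar : Fin M → ℝ) (hPstar : PosPrice Pstar) (heq : z Pstar = 0)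
    (P : Fin M → ℝ) (hP : PosPrice P)
    (hle : ∀ m, P m ≤ Pstar m) (ℓ : Fin M) (hℓ : P ℓ = Pstar ℓ)
    (hne : P ≠ Pstar) :
    0 < ∑ m, Pstar m * z P m := by
  classical
  set c : Fin M → ℝ := fun m => P m * z P m with hcdef
  set r : Fin M → ℝ := fun m => P m / Pstar m with hrdef
  have hr0 : ∀ m, 0 < r m := fun m => div_pos (hP m) (hPstar m)
  have hr1 : ∀ m, r m ≤ 1 := fun m => (div_le_one (hPstar m)).mpr (hle m)
  have hfil : ∀ t : ℝ, univ.filter (fun m => r m ≤ t)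
      = univ.filter (fun m => P m ≤ t * Pstar m) := by
    intro t
    ext m
    simp only [Finset.mem_filter, Finset.mem_univ, true_and, hrdef]
    rw [div_le_iff₀ (hPstar m)]
  have hcumstrict : ∀ t : ℝ, t < 1 →
      (univ.filter (fun m => r m ≤ t)).Nonempty →
      0 < ∑ m ∈ univ.filter (fun m => r m ≤ t), c m := by
    intro t ht hne'
    obtain ⟨m, hm⟩ := hne'
    have hm' : P m ≤ t * Pstar m := by
      rw [hfil t] at hm
      simpa using hm
    have ht0 : 0 < t := by nlinarith [hP m, hPstar m]
    rw [hfil t]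
    exact cum_pos hhom hwalras hgs Pstar hPstar heq P hP ℓ hℓ t ht0 ht ⟨m, hm'⟩
  have hcum : ∀ t : ℝ, t < 1 → 0 ≤ ∑ m ∈ univ.filter (fun m => r m ≤ t), c m := by
    intro t ht
    by_cases h : (univ.filter (fun m => r m ≤ t)).Nonempty
    · exact le_of_lt (hcumstrict t ht h)
    · rw [Finset.not_nonempty_iff_eq_empty.mp h]; simp
  -- minimum ratio
  obtain ⟨m₁, _, hmin⟩ := Finset.exists_min_image univ r ⟨ℓ, Finset.mem_univ ℓ⟩
  set μ := r m₁ with hμdef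
  have hμ0 : 0 < μ := hr0 m₁
  have hμlt1 : μ < 1 := by
    have hx : ∃ m, P m ≠ Pstar m := by
      by_contra h
      push_neg at h
      exact hne (funext h)
    obtain ⟨m, hm⟩ := hx
    have : r m < 1 := lt_of_le_of_ne (hr1 m) (by
      intro h
      exact hm (by
        have := (div_eq_one_iff_eq (ne_of_gt (hPstar m))).mp h
        exact this))
    exact lt_of_le_of_lt (hmin m (Finset.mem_univ m)) this
  -- uniform lower bound δ over level thresholds
  set T := (Finset.image r univ).filter (fun v => v < 1) with hTdef
  have hTne : T.Nonempty :=
    ⟨μ, Finset.mem_filter.mpr ⟨Finset.mem_image_of_mem r (Finset.mem_univ m₁), hμlt1⟩⟩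
  set cumf : ℝ → ℝ := fun t => ∑ m ∈ univ.filter (fun m => r m ≤ t), c m with hcumfdef
  set δ := (T.image cumf).min' (hTne.image cumf) with hδdef
  have hδpos : 0 < δ := by
    have hmem := Finset.min'_mem (T.image cumf) (hTne.image cumf)
    obtain ⟨v, hvT, hv⟩ := Finset.mem_image.mp hmem
    have hv1 : v < 1 := (Finset.mem_filter.mp hvT).2
    obtain ⟨m, _, hm⟩ := Finset.mem_image.mp (Finset.mem_filter.mp hvT).1
    have hnem : (univ.filter (fun m' => r m' ≤ v)).Nonempty :=
      ⟨m, Finset.mem_filter.mpr ⟨Finset.mem_univ m, le_of_eq hm⟩⟩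
    rw [hδdef, ← hv]
    exact hcumstrict v hv1 hnem
  have hδle : ∀ t : ℝ, μ ≤ t → t < 1 → δ ≤ cumf t := by
    intro t hμt ht1
    have hTtne : (T.filter (fun v => v ≤ t)).Nonempty := by
      refine ⟨μ, Finset.mem_filter.mpr ⟨?_, hμt⟩⟩
      exact Finset.mem_filter.mpr ⟨Finset.mem_image_of_mem r (Finset.mem_univ m₁), hμlt1⟩
    set vt := (T.filter (fun v => v ≤ t)).max' hTtne with hvtdef
    have hvtmem := Finset.max'_mem _ hTtne
    have hvtT : vt ∈ T := (Finset.mem_filter.mp hvtmem).1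
    have hvtle : vt ≤ t := (Finset.mem_filter.mp hvtmem).2
    have hset : univ.filter (fun m => r m ≤ t) = univ.filter (fun m => r m ≤ vt) := by
      ext m
      simp only [Finset.mem_filter, Finset.mem_univ, true_and]
      constructor
      · intro h
        exact Finset.le_max' (T.filter (fun v => v ≤ t)) (r m)
          (Finset.mem_filter.mpr ⟨Finset.mem_filter.mpr
            ⟨Finset.mem_image_of_mem r (Finset.mem_univ m), lt_of_le_of_lt h ht1⟩, h⟩)
      · intro h; exact le_trans h hvtle
    have : cumf t = cumf vt := by rw [hcumfdef]; simp only; rw [hset]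
    rw [this]
    exact Finset.min'_le _ _ (Finset.mem_image_of_mem cumf hvtT)
  -- modified c
  set c' := Function.update c m₁ (c m₁ - δ) with hc'def
  have hcum' : ∀ t : ℝ, t < 1 → 0 ≤ ∑ m ∈ univ.filter (fun m => r m ≤ t), c' m := by
    intro t ht
    by_cases hμt : μ ≤ t
    · have hm₁mem : m₁ ∈ univ.filter (fun m => r m ≤ t) :=
        Finset.mem_filter.mpr ⟨Finset.mem_univ m₁, hμt⟩
      have hs : ∑ m ∈ univ.filter (fun m => r m ≤ t), c' m
          = (∑ m ∈ univ.filter (fun m => r m ≤ t), c m) - δ := by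
        rw [hc'def, Finset.sum_update_of_mem hm₁mem]
        rw [← Finset.add_sum_erase _ c hm₁mem, Finset.sdiff_singleton_eq_erase]
        ring
      rw [hs]
      have := hδle t hμt ht
      rw [hcumfdef] at this
      linarith
    · have hset : univ.filter (fun m => r m ≤ t) = ∅ := by
        refine Finset.filter_eq_empty_iff.mpr (fun m _ => ?_)
        push_neg
        exact lt_of_lt_of_le (lt_of_not_ge hμt) (hmin m (Finset.mem_univ m))
      rw [hset]; simp
  have habel := abel_nonneg c' (((Finset.image r univ).filter (fun v => v < 1)).card)
    r hr0 hr1 le_rfl hcum'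
  -- relate sums
  have hw : 0 < 1 / μ - 1 := by
    have : 1 < 1 / μ := by
      rw [lt_div_iff₀ hμ0]; linarith
    linarith
  have hc'sum : ∑ m, c' m * (1 / r m - 1)
      = (∑ m, c m * (1 / r m - 1)) - δ * (1 / μ - 1) := by
    have hpt : ∀ m, c' m * (1 / r m - 1) =
        c m * (1 / r m - 1) - (if m = m₁ then δ * (1 / r m - 1) else 0) := by
      intro m
      by_cases h : m = m₁
      · subst h; simp [hc'def, Function.update_self]; ring
      · simp [hc'def, Function.update_of_ne h, h]
    rw [Finset.sum_congr rfl (fun m _ => hpt m), Finset.sum_sub_distrib]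
    congr 1
    rw [Finset.sum_ite_eq' univ m₁ (fun m => δ * (1 / r m - 1))]
    simp [hμdef]
  have hmainsum : 0 < ∑ m, c m * (1 / r m - 1) := by
    rw [hc'sum] at habel
    nlinarith
  -- convert to goal
  have hterm : ∀ m, c m * (1 / r m - 1) = Pstar m * z P m - P m * z P m := by
    intro m
    have hPm := ne_of_gt (hP m)
    have hPsm := ne_of_gt (hPstar m)
    rw [hcdef, hrdef]
    simp only
    field_simp
  have : ∑ m, c m * (1 / r m - 1)
      = (∑ m, Pstar m * z P m) - ∑ m, P m * z P m := by
    rw [Finset.sum_congr rfl (fun m _ => hterm m), Finset.sum_sub_distrib]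
  rw [this, hwalras P hP, sub_zero] at hmainsum
  exact hmainsum


end EqValAux

/-- under gross substitutes, homogeneity of degree zero,
continuity and Walras' law, if `P*` is an equilibrium price and `P` is not
proportional to `P*`, then `P*·z(P) > 0`. -/
theorem equilibrium_value_of_excess_demand_pos
    (M : ℕ) (z : (Fin M → ℝ) → Fin M → ℝ)
    (hcont : ContinuousOn z {P | PosPrice P})
    (hhom : ∀ P : Fin M → ℝ, PosPrice P → ∀ lam : ℝ, 0 < lam →
        z (lam • P) = z P)
    (hwalras : ∀ P : Fin M → ℝ, PosPrice P → ∑ m, P m * z P m = 0)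
    (hgs : ∀ P P' : Fin M → ℝ, PosPrice P → PosPrice P' →
        ∀ k : Fin M, P k < P' k → (∀ m, m ≠ k → P' m = P m) →
        ∀ m, m ≠ k → z P m < z P' m)
    (Pstar : Fin M → ℝ) (hPstar : PosPrice Pstar) (heq : z Pstar = 0)
    (P : Fin M → ℝ) (hP : PosPrice P)
    (hnotprop : ∀ lam : ℝ, P ≠ lam • Pstar) :
    0 < ∑ m, Pstar m * z P m := by
  classical
  rcases Nat.eq_zero_or_pos M with hM | hM
  · exfalso
    refine hnotprop 1 (funext fun m => ?_)
    exact absurd m.isLt (by omega)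
  -- normalization
  obtain ⟨m₂, _, hmax⟩ := Finset.exists_max_image Finset.univ
    (fun m => P m / Pstar m) ⟨⟨0, hM⟩, Finset.mem_univ _⟩
  set lam := P m₂ / Pstar m₂ with hlamdef
  have hlam : 0 < lam := div_pos (hP m₂) (hPstar m₂)
  set P' : Fin M → ℝ := fun m => P m / lam with hP'def
  have hP' : PosPrice P' := fun m => div_pos (hP m) hlam
  have hzP : z P = z P' := by
    have h1 := hhom P' hP' lam hlam
    have h2 : lam • P' = P := by
      funext m
      simp only [Pi.smul_apply, smul_eq_mul, hP'def]
      field_simp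
    rw [h2] at h1
    exact h1
  have hle : ∀ m, P' m ≤ Pstar m := by
    intro m
    have h1 : P m / Pstar m ≤ lam := hmax m (Finset.mem_univ m)
    rw [div_le_iff₀ (hPstar m)] at h1
    rw [hP'def]
    rw [div_le_iff₀ hlam]
    linarith [mul_comm (Pstar m) lam]
  have hPm2 : P m₂ = lam * Pstar m₂ := by
    rw [hlamdef]
    rw [mul_comm (P m₂ / Pstar m₂) (Pstar m₂)] 
    exact (mul_div_cancel₀ (P m₂) (ne_of_gt (hPstar m₂))).symm
  have hℓ : P' m₂ = Pstar m₂ := by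
    rw [hP'def]
    simp only
    rw [hPm2, mul_div_cancel_left₀ _ (ne_of_gt hlam)]
  have hne : P' ≠ Pstar := by
    intro h
    refine hnotprop lam (funext fun m => ?_)
    have h1 : P m / lam = Pstar m := by
      have := congrFun h m
      simpa [hP'def] using this
    simp only [Pi.smul_apply, smul_eq_mul]
    rw [← h1, mul_comm, div_mul_cancel₀ _ (ne_of_gt hlam)]
  have := EqValAux.main_norm hhom hwalras hgs Pstar hPstar heq P' hP' hle m₂ hℓ hne
  rw [hzP]
  exact this
end

section
/- Global stability of continuous-time tatonnement: under gross substitutes, homogeneity of degree zero, Walras' law, and continuity of z, the function V(P) = ∑_m (p_m − p*_m)² is a Lyapunov function for the price dynamics dP/dt = z(P), where P* is the (normalized) equilibrium price with the same norm-type normalization; that is, dV/dt = −2 P*·z(P) ≤ 0 along trajectories, with equality only at equilibrium prices. -/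
open Finset

/-- Path lemma: if prices rise pointwise (strictly somewhere), excess demand
strictly increases at every coordinate whose price is unchanged. -/
lemma gs_path (M : ℕ) (z : (Fin M → ℝ) → Fin M → ℝ)
    (hgs : ∀ P P' : Fin M → ℝ, PosPrice P → PosPrice P' →
        ∀ k : Fin M, P k < P' k → (∀ m, m ≠ k → P' m = P m) →
        ∀ m, m ≠ k → z P m < z P' m) :
    ∀ n : ℕ, ∀ q q' : Fin M → ℝ, PosPrice q → PosPrice q' →
      (∀ m, q m ≤ q' m) → q ≠ q' →
      (Finset.univ.filter (fun m => q m ≠ q' m)).card ≤ n →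
      ∀ j, q j = q' j → z q j < z q' j := by
  intro n
  induction n with
  | zero =>
    intro q q' hq hq' hle hne hcard j hj
    exfalso
    apply hne
    funext m
    by_contra h
    have hm : m ∈ Finset.univ.filter (fun m => q m ≠ q' m) := by
      simp [h]
    have := Finset.card_pos.mpr ⟨m, hm⟩
    omega
  | succ n ih =>
    intro q q' hq hq' hle hne hcard j hj
    have hS : (Finset.univ.filter (fun m => q m ≠ q' m)).Nonempty := by
      rcases Function.ne_iff.mp hne with ⟨m, hm⟩
      exact ⟨m, by simp [hm]⟩
    obtain ⟨k, hk⟩ := hS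
    have hkne : q k ≠ q' k := by simpa using hk
    have hklt : q k < q' k := lt_of_le_of_ne (hle k) hkne
    set q'' : Fin M → ℝ := Function.update q k (q' k) with hq''def
    have hq''pos : PosPrice q'' := by
      intro m
      by_cases hmk : m = k
      · subst hmk; simp [hq''def, Function.update_self]; exact hq' m
      · simp [hq''def, Function.update_of_ne hmk]; exact hq m
    have hupd : ∀ m, m ≠ k → q'' m = q m := by
      intro m hmk; simp [hq''def, Function.update_of_ne hmk]
    have hkk : q'' k = q' k := by simp [hq''def]
    have hjk : j ≠ k := by
      intro h; rw [h] at hj; exact hkne hj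
    have step1 : z q j < z q'' j :=
      hgs q q'' hq hq''pos k (by rw [hkk]; exact hklt) hupd j hjk
    by_cases hfin : q'' = q'
    · rw [hfin] at step1; exact step1
    · have hle'' : ∀ m, q'' m ≤ q' m := by
        intro m
        by_cases hmk : m = k
        · subst hmk; rw [hkk]
        · rw [hupd m hmk]; exact hle m
      have hcard'' : (Finset.univ.filter (fun m => q'' m ≠ q' m)).card ≤ n := by
        have hsub : (Finset.univ.filter (fun m => q'' m ≠ q' m)) ⊆
            (Finset.univ.filter (fun m => q m ≠ q' m)).erase k := by
          intro m hm
          simp only [Finset.mem_filter, Finset.mem_univ, true_and] at hm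
          have hmk : m ≠ k := by
            intro h; subst h; rw [hkk] at hm; exact hm rfl
          rw [Finset.mem_erase]
          refine ⟨hmk, ?_⟩
          simp only [Finset.mem_filter, Finset.mem_univ, true_and]
          rw [← hupd m hmk]; exact hm
        have := Finset.card_le_card hsub
        have hek : ((Finset.univ.filter (fun m => q m ≠ q' m)).erase k).card
            = (Finset.univ.filter (fun m => q m ≠ q' m)).card - 1 :=
          Finset.card_erase_of_mem hk
        omega
      have step2 : z q'' j < z q' j := by
        apply ih q'' q' hq''pos hq' hle'' hfin hcard'' j
        rw [hupd j hjk]; exact hj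
      exact step1.trans step2

/-- At a coordinate where `Q` touches `lam • Pstar` from below (and `Q ≠ lam • Pstar`),
excess demand is negative. -/
lemma gs_max_neg (M : ℕ) (z : (Fin M → ℝ) → Fin M → ℝ)
    (hgs : ∀ P P' : Fin M → ℝ, PosPrice P → PosPrice P' →
        ∀ k : Fin M, P k < P' k → (∀ m, m ≠ k → P' m = P m) →
        ∀ m, m ≠ k → z P m < z P' m)
    (hhom : ∀ P : Fin M → ℝ, PosPrice P → ∀ lam : ℝ, 0 < lam →
        z (lam • P) = z P)
    (Pstar : Fin M → ℝ) (hPstar : PosPrice Pstar) (heq : z Pstar = 0)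
    (Q : Fin M → ℝ) (lam : ℝ) (hQ : PosPrice Q) (hlam : 0 < lam)
    (hle : ∀ m, Q m ≤ lam * Pstar m) (hne : Q ≠ lam • Pstar)
    (k : Fin M) (hk : Q k = lam * Pstar k) : z Q k < 0 := by
  have hlampos : PosPrice (lam • Pstar) := fun m => by
    simp only [Pi.smul_apply, smul_eq_mul]; exact mul_pos hlam (hPstar m)
  have hz : z (lam • Pstar) = 0 := by rw [hhom Pstar hPstar lam hlam, heq]
  have := gs_path M z hgs
    (Finset.univ.filter (fun m => Q m ≠ (lam • Pstar) m)).card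
    Q (lam • Pstar) hQ hlampos (fun m => hle m) hne le_rfl k (by simpa using hk)
  rw [hz] at this
  simpa using this

lemma ratio_const (M : ℕ) (Pstar : Fin M → ℝ) (hPstar : ∀ m, 0 < Pstar m)
    (P : Fin M → ℝ) (hP : ∀ m, 0 < P m)
    (h1 : (Finset.univ.image (fun m => P m / Pstar m)).card ≤ 1) :
    ∃ lam : ℝ, 0 < lam ∧ P = lam • Pstar := by
  rcases Nat.eq_zero_or_pos M with hM | hM
  · subst hM
    exact ⟨1, one_pos, funext fun m => m.elim0⟩
  · set m0 : Fin M := ⟨0, hM⟩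
    refine ⟨P m0 / Pstar m0, div_pos (hP m0) (hPstar m0), funext fun m => ?_⟩
    have hall := Finset.card_le_one.mp h1
    have hm : P m / Pstar m = P m0 / Pstar m0 :=
      hall _ (Finset.mem_image_of_mem _ (Finset.mem_univ m))
        _ (Finset.mem_image_of_mem _ (Finset.mem_univ m0))
    have := (div_eq_iff (ne_of_gt (hPstar m))).mp hm
    simpa [Pi.smul_apply, smul_eq_mul, mul_comm] using this

/-- Key lemma: if `P` is not proportional to `Pstar`, then `Pstar · z(P) > 0`. -/
lemma gs_key (M : ℕ) (z : (Fin M → ℝ) → Fin M → ℝ)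
    (hhom : ∀ P : Fin M → ℝ, PosPrice P → ∀ lam : ℝ, 0 < lam →
        z (lam • P) = z P)
    (hwalras : ∀ P : Fin M → ℝ, PosPrice P → ∑ m, P m * z P m = 0)
    (hgs : ∀ P P' : Fin M → ℝ, PosPrice P → PosPrice P' →
        ∀ k : Fin M, P k < P' k → (∀ m, m ≠ k → P' m = P m) →
        ∀ m, m ≠ k → z P m < z P' m)
    (Pstar : Fin M → ℝ) (hPstar : PosPrice Pstar) (heq : z Pstar = 0) :
    ∀ n : ℕ, ∀ P : Fin M → ℝ, PosPrice P →
      (Finset.univ.image (fun m => P m / Pstar m)).card ≤ n →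
      (¬ ∃ lam : ℝ, 0 < lam ∧ P = lam • Pstar) →
      0 < ∑ m, Pstar m * z P m := by
  intro n
  induction n with
  | zero =>
    intro P hP hcard hprop
    exact absurd (ratio_const M Pstar hPstar P hP (le_trans hcard (by norm_num))) hprop
  | succ n ih =>
    intro P hP hcard hprop
    set R : Fin M → ℝ := fun m => P m / Pstar m with hR
    by_cases h1 : (Finset.univ.image R).card ≤ 1
    · exact absurd (ratio_const M Pstar hPstar P hP h1) hprop
    push_neg at h1
    have himg_ne : (Finset.univ.image R).Nonempty := Finset.card_pos.mp (by omega)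
    set lam1 := (Finset.univ.image R).max' himg_ne with hlam1def
    have hlam1mem : lam1 ∈ Finset.univ.image R := Finset.max'_mem _ _
    have himg2_ne : ((Finset.univ.image R).erase lam1).Nonempty := by
      apply Finset.card_pos.mp
      rw [Finset.card_erase_of_mem hlam1mem]
      omega
    set lam2 := ((Finset.univ.image R).erase lam1).max' himg2_ne with hlam2def
    have hlam2mem : lam2 ∈ (Finset.univ.image R).erase lam1 := Finset.max'_mem _ _
    have hlam2ne : lam2 ≠ lam1 := (Finset.mem_erase.mp hlam2mem).1
    have hlam2img : lam2 ∈ Finset.univ.image R := (Finset.mem_erase.mp hlam2mem).2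
    have hRle1 : ∀ m, R m ≤ lam1 := fun m =>
      Finset.le_max' _ _ (Finset.mem_image_of_mem _ (Finset.mem_univ m))
    have hRle2 : ∀ m, R m ≠ lam1 → R m ≤ lam2 := fun m hm =>
      Finset.le_max' _ _ (Finset.mem_erase.mpr ⟨hm, Finset.mem_image_of_mem _ (Finset.mem_univ m)⟩)
    have hlam21 : lam2 < lam1 :=
      lt_of_le_of_ne (Finset.le_max' _ _ hlam2img) hlam2ne
    obtain ⟨mK, -, hmK⟩ := Finset.mem_image.mp hlam1mem
    obtain ⟨mB, -, hmB⟩ := Finset.mem_image.mp hlam2img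
    have hRpos : ∀ m, 0 < R m := fun m => div_pos (hP m) (hPstar m)
    have hlam1pos : 0 < lam1 := hmK ▸ hRpos mK
    have hlam2pos : 0 < lam2 := hmB ▸ hRpos mB
    -- relation between ratio and K-membership
    have hKiff : ∀ m, P m = lam1 * Pstar m ↔ R m = lam1 := by
      intro m
      rw [hR, div_eq_iff (ne_of_gt (hPstar m))]
    have hmKK : P mK = lam1 * Pstar mK := (hKiff mK).mpr hmK
    have hmBK : P mB ≠ lam1 * Pstar mB := fun h => hlam2ne (hmB ▸ (hKiff mB).mp h)
    -- bound P m ≤ lam * Pstar m from ratio bounds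
    have hPle1 : ∀ m, P m ≤ lam1 * Pstar m := fun m => by
      have := (div_le_iff₀ (hPstar m)).mp (hRle1 m)
      linarith [this]
    have hPle2 : ∀ m, P m ≠ lam1 * Pstar m → P m ≤ lam2 * Pstar m := fun m hm => by
      have h := hRle2 m (fun h => hm ((hKiff m).mpr h))
      have := (div_le_iff₀ (hPstar m)).mp h
      linarith [this]
    -- the lowered price vector
    classical
    set P' : Fin M → ℝ := fun m => if P m = lam1 * Pstar m then lam2 * Pstar m else P m
      with hP'def
    have hP'pos : PosPrice P' := by
      intro m
      by_cases h : P m = lam1 * Pstar m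
      · simp only [hP'def, if_pos h]; exact mul_pos hlam2pos (hPstar m)
      · simp only [hP'def, if_neg h]; exact hP m
    have hP'le : ∀ m, P' m ≤ P m := by
      intro m
      by_cases h : P m = lam1 * Pstar m
      · simp only [hP'def, if_pos h]; rw [h]
        exact mul_le_mul_of_nonneg_right (le_of_lt hlam21) (le_of_lt (hPstar m))
      · simp only [hP'def, if_neg h]; exact le_rfl
    have hP'eq : ∀ m, P m ≠ lam1 * Pstar m → P' m = P m := by
      intro m h; simp only [hP'def, if_neg h]
    have hP'K : ∀ m, P m = lam1 * Pstar m → P' m = lam2 * Pstar m := by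
      intro m h; simp only [hP'def, if_pos h]
    have hP'ne : P' ≠ P := by
      intro h
      have h2 := congrFun h mK
      rw [hP'K mK hmKK, hmKK] at h2
      have := hPstar mK
      nlinarith
    -- strict increase of z off K along the path P' → P
    have hzpath : ∀ m, P m ≠ lam1 * Pstar m → z P' m < z P m := by
      intro m hm
      exact gs_path M z hgs _ P' P hP'pos hP (fun j => hP'le j) hP'ne le_rfl m (hP'eq m hm)
    -- image of the new ratio function
    have hcard' : (Finset.univ.image (fun m => P' m / Pstar m)).card ≤ n := by
      have hsub : (Finset.univ.image (fun m => P' m / Pstar m)) ⊆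
          (Finset.univ.image R).erase lam1 := by
        intro x hx
        obtain ⟨m, -, hm⟩ := Finset.mem_image.mp hx
        by_cases h : P m = lam1 * Pstar m
        · rw [hP'K m h] at hm
          rw [mul_div_assoc, div_self (ne_of_gt (hPstar m)), mul_one] at hm
          exact hm ▸ hlam2mem
        · rw [hP'eq m h] at hm
          exact Finset.mem_erase.mpr ⟨hm ▸ (fun hh => h ((hKiff m).mpr hh)),
            hm ▸ Finset.mem_image_of_mem _ (Finset.mem_univ m)⟩
      have h2 := Finset.card_le_card hsub
      rw [Finset.card_erase_of_mem hlam1mem] at h2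
      omega
    -- coefficients
    set c : Fin M → ℝ := fun m => Pstar m - P m / lam1 with hcdef
    have hcnonneg : ∀ m, 0 ≤ c m := by
      intro m
      have := hPle1 m
      rw [hcdef]
      rw [le_sub_iff_add_le, zero_add, div_le_iff₀ hlam1pos]
      linarith
    have hczero : ∀ m, P m = lam1 * Pstar m → c m = 0 := by
      intro m h
      rw [hcdef]
      field_simp [h]
      rw [h]; ring
    have hcpos : ∀ m, P m ≠ lam1 * Pstar m → 0 < c m := by
      intro m h
      have h2 : P m < lam1 * Pstar m := lt_of_le_of_ne (hPle1 m) h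
      rw [hcdef]
      rw [lt_sub_iff_add_lt, zero_add, div_lt_iff₀ hlam1pos]
      linarith
    -- Step A : ∑ Pstar z P = ∑ c z P
    have stepA : ∑ m, Pstar m * z P m = ∑ m, c m * z P m := by
      have : ∑ m, c m * z P m
          = ∑ m, Pstar m * z P m - (∑ m, P m * z P m) / lam1 := by
        rw [Finset.sum_div, ← Finset.sum_sub_distrib]
        apply Finset.sum_congr rfl
        intro m _
        rw [hcdef]
        field_simp
      rw [this, hwalras P hP]
      simp
    -- Step B : ∑ c z P' < ∑ c z P
    have stepB : ∑ m, c m * z P' m < ∑ m, c m * z P m := by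
      apply Finset.sum_lt_sum
      · intro i _
        by_cases h : P i = lam1 * Pstar i
        · rw [hczero i h]; simp
        · exact mul_le_mul_of_nonneg_left (le_of_lt (hzpath i h)) (hcnonneg i)
      · exact ⟨mB, Finset.mem_univ mB,
          mul_lt_mul_of_pos_left (hzpath mB hmBK) (hcpos mB hmBK)⟩
    -- Step C : 0 ≤ ∑ c z P'
    have stepC : 0 ≤ ∑ m, c m * z P' m := by
      by_cases hprop' : ∃ lam : ℝ, 0 < lam ∧ P' = lam • Pstar
      · obtain ⟨lam, hlam, hPe⟩ := hprop'
        have : z P' = 0 := by rw [hPe, hhom Pstar hPstar lam hlam, heq]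
        simp [this]
      · have hIH : 0 < ∑ m, Pstar m * z P' m := ih P' hP'pos hcard' hprop'
        have hzK : ∀ m, P m = lam1 * Pstar m → z P' m < 0 := by
          intro m hm
          apply gs_max_neg M z hgs hhom Pstar hPstar heq P' lam2 hP'pos hlam2pos
          · intro j
            by_cases h : P j = lam1 * Pstar j
            · rw [hP'K j h]
            · rw [hP'eq j h]; exact hPle2 j h
          · intro h
            exact hprop' ⟨lam2, hlam2pos, h⟩
          · exact hP'K m hm
        have e1 : ∑ m, c m * z P' m
            = ∑ m, Pstar m * z P' m - (∑ m, P m * z P' m) / lam1 := by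
          rw [Finset.sum_div, ← Finset.sum_sub_distrib]
          apply Finset.sum_congr rfl
          intro m _
          rw [hcdef]
          field_simp
        have e2 : ∑ m, P m * z P' m
            = ∑ m, P' m * z P' m + ∑ m, (P m - P' m) * z P' m := by
          rw [← Finset.sum_add_distrib]
          apply Finset.sum_congr rfl
          intro m _
          ring
        have e3 : ∑ m, (P m - P' m) * z P' m ≤ 0 := by
          apply Finset.sum_nonpos
          intro m _
          by_cases h : P m = lam1 * Pstar m
          · apply mul_nonpos_of_nonneg_of_nonpos
            · linarith [hP'le m]
            · exact le_of_lt (hzK m h)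
          · rw [hP'eq m h]; simp
        have e4 : ∑ m, P m * z P' m ≤ 0 := by
          rw [e2, hwalras P' hP'pos]
          linarith
        have e5 : (∑ m, P m * z P' m) / lam1 ≤ 0 :=
          div_nonpos_of_nonpos_of_nonneg e4 (le_of_lt hlam1pos)
        linarith
    rw [stepA]
    linarith

/-- Global stability of tatonnement: under gross substitutes,
homogeneity of degree zero, Walras' law and continuity, `V(P) = ∑ (p_m − p*_m)²`
is a Lyapunov function for `dP/dt = z(P)`: along trajectories the derivative
of `V` satisfies `dV/dt = 2(P − P*)·z(P) = −2 P*·z(P) ≤ 0`, with equality only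
at equilibrium prices (`z(P) = 0`). -/
theorem tatonnement_lyapunov
    (M : ℕ) (z : (Fin M → ℝ) → Fin M → ℝ)
    (hcont : ContinuousOn z {P | PosPrice P})
    (hhom : ∀ P : Fin M → ℝ, PosPrice P → ∀ lam : ℝ, 0 < lam →
        z (lam • P) = z P)
    (hwalras : ∀ P : Fin M → ℝ, PosPrice P → ∑ m, P m * z P m = 0)
    (hgs : ∀ P P' : Fin M → ℝ, PosPrice P → PosPrice P' →
        ∀ k : Fin M, P k < P' k → (∀ m, m ≠ k → P' m = P m) →
        ∀ m, m ≠ k → z P m < z P' m)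
    (Pstar : Fin M → ℝ) (hPstar : PosPrice Pstar) (heq : z Pstar = 0)
    (P : Fin M → ℝ) (hP : PosPrice P) :
    (2 * ∑ m, (P m - Pstar m) * z P m = -(2 * ∑ m, Pstar m * z P m)) ∧
    (2 * ∑ m, (P m - Pstar m) * z P m ≤ 0) ∧
    (2 * ∑ m, (P m - Pstar m) * z P m = 0 → z P = 0) := by
  have hW := hwalras P hP
  have hsplit : ∑ m, (P m - Pstar m) * z P m
      = ∑ m, P m * z P m - ∑ m, Pstar m * z P m := by
    rw [← Finset.sum_sub_distrib]
    apply Finset.sum_congr rfl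
    intro m _
    ring
  by_cases hprop : ∃ lam : ℝ, 0 < lam ∧ P = lam • Pstar
  · obtain ⟨lam, hlam, hPe⟩ := hprop
    have hz : z P = 0 := by rw [hPe, hhom Pstar hPstar lam hlam, heq]
    refine ⟨?_, ?_, fun _ => hz⟩ <;> simp [hz]
  · have hkey : 0 < ∑ m, Pstar m * z P m :=
      gs_key M z hhom hwalras hgs Pstar hPstar heq
        (Finset.univ.image (fun m => P m / Pstar m)).card P hP le_rfl hprop
    refine ⟨?_, ?_, ?_⟩
    · rw [hsplit, hW]; ring
    · rw [hsplit, hW]; linarith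
    · intro h
      rw [hsplit, hW] at h
      exfalso
      linarith
end
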